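/- arXiv:2101.08075 — 3 statements merged into one kernel-verified Lean document; each statement's English description precedes it below -/
import Mathlib

section
/- Let M be a locally compact, σ-compact, connected metric space and μ a Borel measure on M that is positive on nonempty open sets and finite on compact sets. Let U be a proper open subset of M and let Q and K be disjoint compact subsets of the boundary ∂U. Then for every ε > 0 there exists δ > 0 such that, writing V_δ = {x ∈ M : dist(x, K) < δ}, the set V_δ is disjoint from Q and for every p ∈ Q and every r > 0 one has μ(B(p,r) ∩ U ∩ V_δ) < ε · μ(B(p,r) ∩ U). -/
open Metric MeasureTheory Set

theorem stmt0 {M : Type*} [MetricSpace M] [LocallyCompactSpace M] [SigmaCompactSpace M]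
    [ConnectedSpace M] [MeasurableSpace M] [BorelSpace M] (μ : Measure M)
    (hpos : ∀ O : Set M, IsOpen O → O.Nonempty → 0 < μ O)
    (hfin : ∀ K : Set M, IsCompact K → μ K < ⊤)
    (U : Set M) (hU : IsOpen U) (hUproper : U ≠ univ)
    (Q K : Set M) (hQ : IsCompact Q) (hK : IsCompact K)
    (hQb : Q ⊆ frontier U) (hKb : K ⊆ frontier U) (hdisj : Disjoint Q K)
    (ε : ℝ) (hε : 0 < ε) :
    ∃ δ > 0, Disjoint {x : M | EMetric.infEdist x K < ENNReal.ofReal δ} Q ∧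
      ∀ p ∈ Q, ∀ r > 0,
        μ (ball p r ∩ U ∩ {x : M | EMetric.infEdist x K < ENNReal.ofReal δ}) <
          ENNReal.ofReal ε * μ (ball p r ∩ U) := by
  -- The set in the statement is the thickening of K.
  have hVdef : ∀ δ : ℝ, {x : M | EMetric.infEdist x K < ENNReal.ofReal δ} = thickening δ K :=
    fun δ => rfl
  -- positivity of μ (ball p r ∩ U) for p ∈ Q
  have hballpos : ∀ p ∈ Q, ∀ r : ℝ, 0 < r → 0 < μ (ball p r ∩ U) := by
    intro p hp r hr
    have hpc : p ∈ closure U := (hQb hp).1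
    have hne : (ball p r ∩ U).Nonempty :=
      _root_.mem_closure_iff.1 hpc (ball p r) isOpen_ball (mem_ball_self hr)
    exact hpos _ (isOpen_ball.inter hU) hne
  rcases Q.eq_empty_or_nonempty with hQe | hQne
  · refine ⟨1, one_pos, by simp [hQe], ?_⟩
    intro p hp
    simp [hQe] at hp
  -- main case
  -- separation between Q and K
  obtain ⟨δ₁, hδ₁, hdis⟩ := hdisj.exists_thickenings hQ hK.isClosed
  -- compact superset of K and δ₀ with thickening δ₀ K inside it
  obtain ⟨K', hK'c, hKK'⟩ := exists_compact_superset hK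
  obtain ⟨δ₀, hδ₀, hthick⟩ := hK.exists_thickening_subset_open isOpen_interior hKK'
  -- finite cover of Q by balls of radius δ₁/2 centered in Q
  have hcov : Q ⊆ ⋃ p ∈ Q, ball p (δ₁ / 2) := fun p hp =>
    mem_biUnion hp (mem_ball_self (half_pos hδ₁))
  obtain ⟨t, htQ, htfin, htcov⟩ :=
    hQ.elim_finite_subcover_image (fun p _ => isOpen_ball) hcov
  have htne : t.Nonempty := by
    obtain ⟨q, hq⟩ := hQne
    rcases mem_iUnion₂.1 (htcov hq) with ⟨p, hp, -⟩
    exact ⟨p, hp⟩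
  -- ρ : minimum of μ (ball p (δ₁/2) ∩ U) over the finite cover
  set F := htfin.toFinset with hF
  have hFne : F.Nonempty := by
    obtain ⟨p, hp⟩ := htne
    exact ⟨p, htfin.mem_toFinset.2 hp⟩
  set ρ : ENNReal := F.inf' hFne (fun p => μ (ball p (δ₁ / 2) ∩ U)) with hρ
  have hρpos : 0 < ρ := by
    rw [hρ, Finset.lt_inf'_iff]
    intro p hp
    exact hballpos p (htQ (htfin.mem_toFinset.1 hp)) _ (half_pos hδ₁)
  -- ρ bounds μ (ball p r ∩ U) from below for p ∈ Q, r ≥ δ₁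
  have hρle : ∀ p ∈ Q, ∀ r : ℝ, δ₁ ≤ r → ρ ≤ μ (ball p r ∩ U) := by
    intro p hp r hr
    rcases mem_iUnion₂.1 (htcov hp) with ⟨q, hq, hpq⟩
    have hsub : ball q (δ₁ / 2) ⊆ ball p r := by
      intro x hx
      have : dist x p < δ₁ / 2 + δ₁ / 2 :=
        (dist_triangle x q p).trans_lt
          (add_lt_add (mem_ball.1 hx) (by rwa [mem_ball, dist_comm] at hpq))
      rw [mem_ball]
      linarith [this]
    calc ρ ≤ μ (ball q (δ₁ / 2) ∩ U) :=
          Finset.inf'_le _ (htfin.mem_toFinset.2 hq)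
      _ ≤ μ (ball p r ∩ U) := measure_mono (inter_subset_inter_left _ hsub)
  -- the decreasing sequence of thickenings
  set c : ℝ := min δ₁ δ₀ with hc
  have hcpos : 0 < c := lt_min hδ₁ hδ₀
  set s : ℕ → Set M := fun n => thickening (c / (n + 1)) K ∩ U with hs
  have hsmeas : ∀ n, NullMeasurableSet (s n) μ := fun n =>
    ((isOpen_thickening.inter hU).measurableSet).nullMeasurableSet
  have hsanti : Antitone s := by
    intro n m hnm
    refine inter_subset_inter_left _ (thickening_mono ?_ K)
    apply div_le_div_of_nonneg_left hcpos.le (by positivity)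
    exact_mod_cast by omega
  have hsfin : ∃ n, μ (s n) ≠ ⊤ := by
    refine ⟨0, ?_⟩
    have h1 : s 0 ⊆ K' := by
      refine (inter_subset_left).trans ?_
      refine (thickening_mono ?_ K).trans (hthick.trans interior_subset)
      simp [hc]
    exact ((measure_mono h1).trans_lt (hfin K' hK'c)).ne
  have hiInter : (⋂ n, s n) = ∅ := by
    rw [eq_empty_iff_forall_notMem]
    intro x hx
    have hxU : x ∈ U := (mem_iInter.1 hx 0).2
    have hxK : x ∈ closure K := by
      rw [EMetric.mem_closure_iff_infEdist_zero]
      have hle : ∀ n : ℕ, EMetric.infEdist x K ≤ ENNReal.ofReal (c / (n + 1)) := by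
        intro n
        exact le_of_lt (mem_iInter.1 hx n).1
      have htend : Filter.Tendsto (fun n : ℕ => ENNReal.ofReal (c / (n + 1)))
          Filter.atTop (nhds 0) := by
        rw [show (0 : ENNReal) = ENNReal.ofReal 0 by simp]
        apply ENNReal.tendsto_ofReal
        have h0 := tendsto_one_div_add_atTop_nhds_zero_nat.const_mul c
        simp only [mul_one_div, mul_zero] at h0
        exact h0
      exact le_antisymm (ge_of_tendsto' htend hle) zero_le
    rw [hK.isClosed.closure_eq] at hxK
    have : x ∈ frontier U := hKb hxK
    rw [frontier, hU.interior_eq] at this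
    exact this.2 hxU
  -- continuity from above
  have htendμ : Filter.Tendsto (μ ∘ s) Filter.atTop (nhds 0) := by
    have := tendsto_measure_iInter_atTop (μ := μ) hsmeas hsanti hsfin
    rwa [hiInter, measure_empty] at this
  have hρε : 0 < ENNReal.ofReal ε * ρ :=
    ENNReal.mul_pos (ENNReal.ofReal_pos.2 hε).ne' hρpos.ne'
  obtain ⟨n, hn⟩ := (htendμ.eventually_lt_const hρε).exists
  set δ : ℝ := c / (n + 1) with hδdef
  have hδpos : 0 < δ := by positivity
  have hδle₁ : δ ≤ δ₁ := by
    calc δ ≤ c := by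
          rw [hδdef]
          apply div_le_self hcpos.le
          exact_mod_cast by omega
      _ ≤ δ₁ := min_le_left _ _
  refine ⟨δ, hδpos, ?_, ?_⟩
  · -- disjointness from Q
    rw [hVdef]
    have h1 : thickening δ K ⊆ thickening δ₁ K := thickening_mono hδle₁ K
    have h2 : Q ⊆ thickening δ₁ Q := self_subset_thickening hδ₁ Q
    exact hdis.symm.mono h1 h2
  · intro p hp r hr
    rw [hVdef]
    rcases le_or_gt r δ₁ with hrδ | hrδ
    · -- small radius: intersection is empty
      have hempty : ball p r ∩ U ∩ thickening δ K = ∅ := by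
        rw [eq_empty_iff_forall_notMem]
        rintro x ⟨⟨hxb, -⟩, hxt⟩
        have hxQ : x ∈ thickening δ₁ Q := by
          rw [mem_thickening_iff_exists_edist_lt]
          exact ⟨p, hp, by
            rw [edist_dist]
            exact (ENNReal.ofReal_lt_ofReal_iff hδ₁).2 (by
              exact (mem_ball.1 hxb).trans_le hrδ)⟩
        have hxK : x ∈ thickening δ₁ K := thickening_mono hδle₁ K hxt
        exact (hdis.le_bot ⟨hxQ, hxK⟩)
      rw [hempty, measure_empty]
      exact ENNReal.mul_pos (ENNReal.ofReal_pos.2 hε).ne' (hballpos p hp r hr).ne'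
    · -- large radius
      have h1 : ball p r ∩ U ∩ thickening δ K ⊆ s n := by
        rintro x ⟨⟨-, hxU⟩, hxt⟩
        exact ⟨hxt, hxU⟩
      calc μ (ball p r ∩ U ∩ thickening δ K) ≤ μ (s n) := measure_mono h1
        _ < ENNReal.ofReal ε * ρ := hn
        _ ≤ ENNReal.ofReal ε * μ (ball p r ∩ U) := by
            exact mul_le_mul_right (hρle p hp r hrδ.le) _
end

section
/- Let X be a locally compact Hausdorff space, ν a regular σ-finite Borel measure on X, S ⊆ X a closed set, and φ : X → ℝ a Borel measurable function whose restriction to S is continuous. Then there exists a sequence (Q_n)_{n≥1} of pairwise disjoint compact subsets of X \ S such that ν(X \ (S ∪ ⋃_n Q_n)) = 0 and for every n the restriction of φ to S ∪ Q_1 ∪ ⋯ ∪ Q_n is continuous. -/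
open Set MeasureTheory
open scoped ENNReal NNReal

-- pasting lemma for two closed sets
lemma aux_union {X : Type*} [TopologicalSpace X] {φ : X → ℝ} {s t : Set X}
    (hs : IsClosed s) (ht : IsClosed t) (hcs : ContinuousOn φ s) (hct : ContinuousOn φ t) :
    ContinuousOn φ (s ∪ t) := by
  have h : s ∪ t = ⋃ b : Bool, (if b then s else t) := by
    ext x; simp [Bool.exists_bool, or_comm]
  rw [h]
  exact (locallyFinite_of_finite _).continuousOn_iUnion
    (fun b => by cases b <;> simpa) (fun b => by cases b <;> simpa)

-- Lusin's theorem
lemma aux_lusin {X : Type*} [TopologicalSpace X] [T2Space X]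
    [MeasurableSpace X] [BorelSpace X]
    (ν : Measure X) [ν.Regular] {φ : X → ℝ} (hφ : Measurable φ)
    {A : Set X} (hA : MeasurableSet A) (h'A : ν A ≠ ∞) {ε : ℝ≥0∞} (hε : ε ≠ 0) :
    ∃ K, K ⊆ A ∧ IsCompact K ∧ ν (A \ K) < ε ∧ ContinuousOn φ K := by
  obtain ⟨b, hbc, -, hb⟩ := TopologicalSpace.exists_countable_basis ℝ
  obtain ⟨V, hV⟩ := (hbc.insert ∅).exists_eq_range (insert_nonempty _ _)
  have hVopen : ∀ k, IsOpen (V k) := by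
    intro k
    have : V k ∈ insert ∅ b := hV ▸ mem_range_self k
    rcases this with h | h
    · simp [h]
    · exact hb.isOpen h
  obtain ⟨δ, δpos, hδ⟩ := ENNReal.exists_pos_sum_of_countable hε ℕ
  have hδ2 : ∀ k, ((δ k : ℝ≥0∞) / 2) ≠ 0 := by
    intro k
    simp [ENNReal.div_eq_top, (δpos k).ne']
  have hPfin : ∀ B : Set X, B ⊆ A → ν B ≠ ∞ :=
    fun B hB => ne_top_of_le_ne_top h'A (measure_mono hB)
  have hK : ∀ k, ∃ K, K ⊆ A ∩ φ ⁻¹' (V k) ∧ IsCompact K ∧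
      ν ((A ∩ φ ⁻¹' (V k)) \ K) < (δ k : ℝ≥0∞) / 2 :=
    fun k => (hA.inter (hφ (hVopen k).measurableSet)).exists_isCompact_diff_lt
      (hPfin _ inter_subset_left) (hδ2 k)
  have hK' : ∀ k, ∃ K, K ⊆ A \ φ ⁻¹' (V k) ∧ IsCompact K ∧
      ν ((A \ φ ⁻¹' (V k)) \ K) < (δ k : ℝ≥0∞) / 2 :=
    fun k => (hA.diff (hφ (hVopen k).measurableSet)).exists_isCompact_diff_lt
      (hPfin _ diff_subset) (hδ2 k)
  choose K hKsub hKc hKm using hK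
  choose K' hK'sub hK'c hK'm using hK'
  refine ⟨⋂ k, (K k ∪ K' k), ?_, ?_, ?_, ?_⟩
  · exact (iInter_subset _ 0).trans (union_subset
      ((hKsub 0).trans inter_subset_left) ((hK'sub 0).trans diff_subset))
  · refine ((hKc 0).union (hK'c 0)).of_isClosed_subset
      (isClosed_iInter fun k => ((hKc k).union (hK'c k)).isClosed) (iInter_subset _ 0)
  · have h1 : A \ ⋂ k, (K k ∪ K' k) = ⋃ k, A \ (K k ∪ K' k) := by
      rw [diff_iInter]
    have h2 : ∀ k, A \ (K k ∪ K' k) ⊆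
        ((A ∩ φ ⁻¹' (V k)) \ K k) ∪ ((A \ φ ⁻¹' (V k)) \ K' k) := by
      intro k x hx
      rcases hx with ⟨hxA, hxn⟩
      simp only [mem_union, mem_diff, mem_inter_iff] at *
      push_neg at hxn
      by_cases hxV : x ∈ φ ⁻¹' (V k)
      · exact Or.inl ⟨⟨hxA, hxV⟩, hxn.1⟩
      · exact Or.inr ⟨⟨hxA, hxV⟩, hxn.2⟩
    calc ν (A \ ⋂ k, (K k ∪ K' k)) ≤ ∑' k, ν (A \ (K k ∪ K' k)) := by
            rw [h1]; exact measure_iUnion_le _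
      _ ≤ ∑' k, (δ k : ℝ≥0∞) := by
            refine ENNReal.tsum_le_tsum fun k => ?_
            calc ν (A \ (K k ∪ K' k)) ≤
                ν (((A ∩ φ ⁻¹' (V k)) \ K k) ∪ ((A \ φ ⁻¹' (V k)) \ K' k)) :=
                  measure_mono (h2 k)
              _ ≤ ν ((A ∩ φ ⁻¹' (V k)) \ K k) + ν ((A \ φ ⁻¹' (V k)) \ K' k) :=
                  measure_union_le _ _
              _ ≤ (δ k : ℝ≥0∞) / 2 + (δ k : ℝ≥0∞) / 2 :=
                  add_le_add (hKm k).le (hK'm k).le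
              _ = (δ k : ℝ≥0∞) := ENNReal.add_halves _
      _ < ε := hδ
  · -- continuity on K
    set Kt := ⋂ k, (K k ∪ K' k) with hKt
    refine continuousOn_iff'.2 fun t ht => ?_
    refine ⟨⋃ k ∈ {k | V k ⊆ t}, (K' k)ᶜ, isOpen_biUnion fun k _ =>
      (hK'c k).isClosed.isOpen_compl, ?_⟩
    ext x
    simp only [mem_inter_iff, mem_iUnion, mem_preimage, mem_setOf_eq, mem_compl_iff,
      exists_prop]
    constructor
    · rintro ⟨hxt, hxK⟩
      have hxA : x ∈ A := (iInter_subset _ 0 hxK).elim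
        (fun h => (hKsub 0 h).1) (fun h => (hK'sub 0 h).1)
      have := hb.open_eq_sUnion' ht
      rw [this] at hxt
      obtain ⟨s, ⟨hsb, hst⟩, hxs⟩ := hxt
      have : s ∈ range V := hV ▸ mem_insert_of_mem _ hsb
      obtain ⟨k, rfl⟩ := this
      refine ⟨⟨k, hst, fun hK'x => ?_⟩, hxK⟩
      exact (hK'sub k hK'x).2 hxs
    · rintro ⟨⟨k, hkt, hxK'⟩, hxK⟩
      refine ⟨?_, hxK⟩
      have : x ∈ K k ∪ K' k := iInter_subset _ k hxK
      rcases this with h | h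
      · exact hkt (hKsub k h).2
      · exact absurd h hxK'

-- exhaustion of a finite-measure set by disjoint Lusin compacts
lemma aux_chain {X : Type*} [TopologicalSpace X] [T2Space X]
    [MeasurableSpace X] [BorelSpace X]
    (ν : Measure X) [ν.Regular] {φ : X → ℝ} (hφ : Measurable φ)
    {A : Set X} (hA : MeasurableSet A) (h'A : ν A ≠ ∞) :
    ∃ C : ℕ → Set X, (∀ k, IsCompact (C k)) ∧ (∀ k, C k ⊆ A) ∧
      (∀ k, ContinuousOn φ (C k)) ∧ Pairwise (Function.onFun Disjoint C) ∧
      ν (A \ ⋃ k, C k) = 0 := by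
  classical
  have hεk : ∀ k : ℕ, ((2 : ℝ≥0∞)⁻¹ ^ k) ≠ 0 := fun k =>
    pow_ne_zero k (by simp)
  set g : Set X → ℕ → Set X := fun B k =>
    if h : MeasurableSet B ∧ ν B ≠ ∞ then
      (aux_lusin ν hφ h.1 h.2 (hεk k)).choose else ∅ with hg
  set R : ℕ → Set X := fun k => Nat.rec A (fun k R => R \ g R k) k with hR
  have hR0 : R 0 = A := rfl
  have hRsucc : ∀ k, R (k + 1) = R k \ g (R k) k := fun k => rfl
  have hRmeas : ∀ k, MeasurableSet (R k) ∧ ν (R k) ≠ ∞ := by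
    intro k
    induction k with
    | zero => exact ⟨hA, h'A⟩
    | succ k ih =>
      have hgood := (aux_lusin ν hφ ih.1 ih.2 (hεk k)).choose_spec
      have hgk : g (R k) k = (aux_lusin ν hφ ih.1 ih.2 (hεk k)).choose := by
        rw [hg]; simp [dif_pos (And.intro ih.1 ih.2)]
      constructor
      · rw [hRsucc, hgk]
        exact ih.1.diff hgood.2.1.isClosed.measurableSet
      · exact ne_top_of_le_ne_top ih.2 (measure_mono (by rw [hRsucc]; exact diff_subset))
  set C : ℕ → Set X := fun k => g (R k) k with hC
  have hCspec : ∀ k, C k ⊆ R k ∧ IsCompact (C k) ∧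
      ν (R k \ C k) < (2 : ℝ≥0∞)⁻¹ ^ k ∧ ContinuousOn φ (C k) := by
    intro k
    have ih := hRmeas k
    have hgood := (aux_lusin ν hφ ih.1 ih.2 (hεk k)).choose_spec
    have hgk : C k = (aux_lusin ν hφ ih.1 ih.2 (hεk k)).choose := by
      rw [hC, hg]; simp [dif_pos (And.intro ih.1 ih.2)]
    rw [hgk]
    exact ⟨hgood.1, hgood.2.1, hgood.2.2.1, hgood.2.2.2⟩
  have hRanti : ∀ j k, j ≤ k → R k ⊆ R j := by
    intro j k hjk
    induction k with
    | zero => simpa [Nat.le_zero.mp hjk]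
    | succ k ih =>
      rcases Nat.lt_or_ge j (k+1) with h | h
      · exact (show R (k+1) ⊆ R k from hRsucc k ▸ diff_subset).trans (ih (Nat.lt_succ_iff.mp h))
      · have : j = k + 1 := le_antisymm hjk h
        subst this; rfl
  have hRsub : ∀ k, R k ⊆ A := fun k => hR0 ▸ hRanti 0 k (Nat.zero_le k)
  refine ⟨C, fun k => (hCspec k).2.1, fun k => (hCspec k).1.trans (hRsub k),
    fun k => (hCspec k).2.2.2, ?_, ?_⟩
  · have key : ∀ j k, j < k → Disjoint (C j) (C k) := by
      intro j k h
      have h1 : C k ⊆ R (j + 1) := ((hCspec k).1).trans (hRanti (j+1) k h)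
      have h2 : R (j + 1) ⊆ (C j)ᶜ := by
        rw [hRsucc]
        exact fun x hx => hx.2
      exact Set.disjoint_left.mpr fun x hxj hxk => (h1.trans h2) hxk hxj
    intro j k hjk
    rcases hjk.lt_or_gt with h | h
    · exact key j k h
    · exact (key k j h).symm
  · have hsub : ∀ k, A \ ⋃ j, C j ⊆ R (k + 1) := by
      intro k
      have : ∀ m, A \ ⋃ j, C j ⊆ R m := by
        intro m
        induction m with
        | zero => exact fun x hx => hx.1
        | succ m ih =>
          intro x hx
          rw [hRsucc]
          exact ⟨ih hx, fun hC => hx.2 (mem_iUnion.2 ⟨m, hC⟩)⟩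
      exact this (k+1)
    have hle : ∀ k : ℕ, ν (A \ ⋃ j, C j) ≤ (2 : ℝ≥0∞)⁻¹ ^ k := by
      intro k
      calc ν (A \ ⋃ j, C j) ≤ ν (R (k+1)) := measure_mono (hsub k)
        _ = ν (R k \ C k) := by rw [hRsucc]
        _ ≤ (2 : ℝ≥0∞)⁻¹ ^ k := (hCspec k).2.2.1.le
    have htend : Filter.Tendsto (fun k : ℕ => ((2 : ℝ≥0∞)⁻¹) ^ k)
        Filter.atTop (nhds 0) :=
      ENNReal.tendsto_pow_atTop_nhds_zero_of_lt_one (by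
        simp [ENNReal.inv_lt_one])
    have hz : ν (A \ ⋃ j, C j) ≤ 0 := ge_of_tendsto' htend (fun k => hle k)
    exact le_antisymm hz zero_le

theorem stmt5 {X : Type*} [TopologicalSpace X] [T2Space X] [LocallyCompactSpace X]
    [MeasurableSpace X] [BorelSpace X]
    (ν : Measure X) [ν.Regular] [SigmaFinite ν]
    (S : Set X) (hS : IsClosed S) (φ : X → ℝ) (hφ : Measurable φ)
    (hφS : ContinuousOn φ S) :
    ∃ Q : ℕ → Set X, Pairwise (Function.onFun Disjoint Q) ∧
      (∀ n, IsCompact (Q n)) ∧ (∀ n, Q n ⊆ Sᶜ) ∧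
      ν (univ \ (S ∪ ⋃ n, Q n)) = 0 ∧
      ∀ n, ContinuousOn φ (S ∪ ⋃ i ≤ n, Q i) := by
  classical
  set A : ℕ → Set X := fun m => Sᶜ ∩ disjointed (spanningSets ν) m with hA
  have hAmeas : ∀ m, MeasurableSet (A m) :=
    fun m => hS.measurableSet.compl.inter
      (MeasurableSet.disjointed (fun i => measurableSet_spanningSets ν i) m)
  have hAfin : ∀ m, ν (A m) ≠ ∞ := by
    intro m
    refine ne_top_of_le_ne_top (measure_spanningSets_lt_top ν m).ne
      (measure_mono ?_)
    exact inter_subset_right.trans (disjointed_subset _ m)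
  have hAdisj : Pairwise (Function.onFun Disjoint A) := by
    intro i j hij
    exact Disjoint.mono inter_subset_right inter_subset_right
      (disjoint_disjointed (spanningSets ν) hij)
  have hAcover : Sᶜ ⊆ ⋃ m, A m := by
    intro x hx
    have : x ∈ ⋃ m, disjointed (spanningSets ν) m := by
      rw [iUnion_disjointed, iUnion_spanningSets]; trivial
    obtain ⟨m, hm⟩ := mem_iUnion.mp this
    exact mem_iUnion.mpr ⟨m, hx, hm⟩
  choose C hCcomp hCsub hCcont hCdisj hCnull using
    fun m => aux_chain ν hφ (hAmeas m) (hAfin m)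
  set e : ℕ ≃ ℕ × ℕ := (Denumerable.eqv (ℕ × ℕ)).symm with he
  refine ⟨fun n => C (e n).1 (e n).2, ?_, ?_, ?_, ?_, ?_⟩
  · intro n m hnm
    have hne : e n ≠ e m := fun h => hnm (e.injective h)
    by_cases h1 : (e n).1 = (e m).1
    · have h2 : (e n).2 ≠ (e m).2 := by
        intro h2; exact hne (Prod.ext h1 h2)
      rw [Function.onFun, h1]
      exact hCdisj (e m).1 h2
    · exact Disjoint.mono (hCsub _ _) (hCsub _ _) (hAdisj h1)
  · exact fun n => hCcomp _ _
  · exact fun n => (hCsub _ _).trans inter_subset_left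
  · have hQU : (⋃ n, C (e n).1 (e n).2) = ⋃ m, ⋃ k, C m k := by
      apply subset_antisymm
      · exact iUnion_subset fun n => subset_iUnion₂ (s := fun m k => C m k) (e n).1 (e n).2
      · refine iUnion₂_subset fun m k => ?_
        have : C m k = C (e (e.symm (m, k))).1 (e (e.symm (m, k))).2 := by
          simp
        rw [this]
        exact subset_iUnion (fun n => C (e n).1 (e n).2) (e.symm (m, k))
    have hsub2 : univ \ (S ∪ ⋃ n, C (e n).1 (e n).2) ⊆
        ⋃ m, (A m \ ⋃ k, C m k) := by
      intro x hx
      obtain ⟨-, hx2⟩ := hx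
      have hxS : x ∈ Sᶜ := fun h => hx2 (Or.inl h)
      have hxQ : x ∉ ⋃ m, ⋃ k, C m k := by
        rw [← hQU]; exact fun h => hx2 (Or.inr h)
      obtain ⟨m, hm⟩ := mem_iUnion.mp (hAcover hxS)
      refine mem_iUnion.mpr ⟨m, hm, fun h => hxQ ?_⟩
      exact mem_iUnion.mpr ⟨m, h⟩
    refine le_antisymm ?_ zero_le
    calc ν (univ \ (S ∪ ⋃ n, C (e n).1 (e n).2))
        ≤ ν (⋃ m, (A m \ ⋃ k, C m k)) := measure_mono hsub2
      _ ≤ ∑' m, ν (A m \ ⋃ k, C m k) := measure_iUnion_le _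
      _ = 0 := by simp [hCnull]
  · intro n
    induction n with
    | zero =>
      have : (⋃ i ≤ 0, C (e i).1 (e i).2) = C (e 0).1 (e 0).2 := by
        simp [Nat.le_zero]
      rw [this]
      exact aux_union hS (hCcomp _ _).isClosed hφS (hCcont _ _)
    | succ n ih =>
      rw [Set.biUnion_le_succ, ← union_assoc]
      refine aux_union ?_ (hCcomp _ _).isClosed ih (hCcont _ _)
      refine hS.union ?_
      exact (Set.finite_le_nat n).isClosed_biUnion fun i _ => (hCcomp _ _).isClosed
end

section
/- Let U be a connected open subset of ℝ^n with nonempty boundary, μ an absolutely continuous (with respect to Lebesgue measure) Borel measure on ℝ^n positive on open sets and finite on compacts, and C a compact connected subset of U with μ(C) = 0. Then for each ε > 0 there is a connected open neighborhood R of C with R ⊆ U such that μ(R ∩ B(p,r)) < ε · μ(U ∩ B(p,r)) for every p ∈ ∂U and every r > 0. -/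
open Metric MeasureTheory Set

theorem stmt12 {n : ℕ} (μ : Measure (EuclideanSpace ℝ (Fin n)))
    (hac : μ ≪ volume)
    (hpos : ∀ O : Set (EuclideanSpace ℝ (Fin n)), IsOpen O → O.Nonempty → 0 < μ O)
    (hfin : ∀ K : Set (EuclideanSpace ℝ (Fin n)), IsCompact K → μ K < ⊤)
    (U : Set (EuclideanSpace ℝ (Fin n))) (hU : IsOpen U) (hUconn : IsConnected U)
    (hbd : (frontier U).Nonempty)
    (C : Set (EuclideanSpace ℝ (Fin n))) (hC : IsCompact C) (hCconn : IsConnected C)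
    (hCU : C ⊆ U) (hC0 : μ C = 0) (ε : ℝ) (hε : 0 < ε) :
    ∃ R : Set (EuclideanSpace ℝ (Fin n)), IsOpen R ∧ IsConnected R ∧ C ⊆ R ∧ R ⊆ U ∧
      ∀ p ∈ frontier U, ∀ r > (0 : ℝ),
        μ (R ∩ ball p r) < ENNReal.ofReal ε * μ (U ∩ ball p r) := by
  haveI : IsFiniteMeasureOnCompacts μ := ⟨fun K hK => hfin K hK⟩
  obtain ⟨c₀, hc₀⟩ := hCconn.nonempty
  -- a positive distance `d` with `thickening d C ⊆ U`
  obtain ⟨d, hd, hdU⟩ := hC.exists_thickening_subset_open hU hCU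
  have hfront : ∀ p ∈ frontier U, ∀ c ∈ C, d ≤ dist p c := by
    intro p hp c hc
    by_contra h
    push_neg at h
    have hpU : p ∈ U := hdU (mem_thickening_iff.2 ⟨c, hc, h⟩)
    exact (hU.frontier_eq ▸ hp).2 hpU
  -- compact set of "intermediate" centers
  set K : Set (EuclideanSpace ℝ (Fin n)) := cthickening (3 * d / 4) C with hKdef
  have hKcpt : IsCompact K := hC.cthickening
  have hKcover : K ⊆ ⋃ z ∈ K, ball z (d / 8) := fun z hz =>
    mem_biUnion hz (mem_ball_self (by linarith))
  obtain ⟨t, htK, htfin, hcover⟩ :=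
    hKcpt.elim_finite_subcover_image (fun z _ => isOpen_ball) hKcover
  set T := htfin.toFinset with hTdef
  set m : ENNReal := T.inf fun z => μ (ball z (d / 8)) with hmdef
  have hm : 0 < m := by
    rw [hmdef, Finset.lt_inf_iff (by simp : (0 : ENNReal) < ⊤)]
    intro z _
    exact hpos _ isOpen_ball (nonempty_ball.2 (by linarith))
  set η : ENNReal := ENNReal.ofReal ε * m with hηdef
  have hη : 0 < η := ENNReal.mul_pos (ENNReal.ofReal_pos.2 hε).ne' hm.ne'
  obtain ⟨V, hCV, hVopen, hVμ⟩ := C.exists_isOpen_lt_of_lt η (hC0 ▸ hη)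
  have hCW : C ⊆ V ∩ thickening (d / 2) C :=
    subset_inter hCV (self_subset_thickening (by linarith) C)
  obtain ⟨δ, hδ, hδW⟩ :=
    hC.exists_thickening_subset_open (hVopen.inter isOpen_thickening) hCW
  refine ⟨thickening δ C, isOpen_thickening, ?_, self_subset_thickening hδ C, ?_, ?_⟩
  · -- connectedness of the thickening
    refine ⟨⟨c₀, self_subset_thickening hδ C hc₀⟩, ?_⟩
    have heq : thickening δ C = ⋃₀ ((fun x => C ∪ ball x δ) '' C) := by
      apply Subset.antisymm
      · rw [thickening_eq_biUnion_ball]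
        exact iUnion₂_subset fun x hx =>
          subset_union_right.trans (subset_sUnion_of_mem ⟨x, hx, rfl⟩)
      · apply sUnion_subset
        rintro s ⟨x, hx, rfl⟩
        refine union_subset (self_subset_thickening hδ C) ?_
        rw [thickening_eq_biUnion_ball]
        exact subset_iUnion₂ (s := fun x _ => ball x δ) x hx
    rw [heq]
    apply isPreconnected_sUnion c₀
    · rintro s ⟨x, hx, rfl⟩
      exact mem_union_left _ hc₀
    · rintro s ⟨x, hx, rfl⟩
      exact IsPreconnected.union x hx (mem_ball_self hδ) hCconn.isPreconnected
        (convex_ball x δ).isPreconnected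
  · -- thickening δ C ⊆ U
    exact (hδW.trans inter_subset_right).trans ((thickening_mono (by linarith) C).trans hdU)
  · intro p hp r hr
    have hUB : (U ∩ ball p r).Nonempty := by
      have hpcl : p ∈ closure U := frontier_subset_closure hp
      obtain ⟨b, hbU, hbdist⟩ := Metric.mem_closure_iff.1 hpcl r hr
      exact ⟨b, hbU, mem_ball.2 (by rwa [dist_comm])⟩
    have hRHS : 0 < μ (U ∩ ball p r) := hpos _ (hU.inter isOpen_ball) hUB
    by_cases hRB : (thickening δ C ∩ ball p r).Nonempty
    · obtain ⟨y, hyR, hyB⟩ := hRB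
      obtain ⟨c, hc, hyc⟩ := mem_thickening_iff.1 (hδW hyR).2
      set D := dist p c with hDdef
      have hdD : d ≤ D := hfront p hp c hc
      have hD0 : 0 < D := lt_of_lt_of_le hd hdD
      have hDlt : D < r + d / 2 := by
        have h1 : D ≤ dist p y + dist y c := dist_triangle p y c
        have h2 : dist p y < r := by rw [dist_comm]; exact mem_ball.1 hyB
        linarith
      set s : ℝ := (3 * d / 4) / D with hsdef
      have hs0 : 0 ≤ s := by positivity
      have hs1 : s ≤ 1 := (div_le_one hD0).2 (by linarith)
      set z := c + s • (p - c) with hzdef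
      have hpcn : ‖p - c‖ = D := (dist_eq_norm p c).symm
      have hzc : dist z c = 3 * d / 4 := by
        have hzs : z - c = s • (p - c) := by rw [hzdef]; abel
        rw [dist_eq_norm, hzs, norm_smul, Real.norm_eq_abs, abs_of_nonneg hs0, hpcn,
          hsdef, div_mul_cancel₀ _ hD0.ne']
      have hpz : dist p z = D - 3 * d / 4 := by
        have hpzs : p - z = (1 - s) • (p - c) := by
          rw [hzdef, sub_smul, one_smul]; abel
        rw [dist_eq_norm, hpzs, norm_smul, Real.norm_eq_abs,
          abs_of_nonneg (by linarith), hpcn, hsdef]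
        field_simp
      have hzK : z ∈ K := mem_cthickening_of_dist_le z c (3 * d / 4) C hc hzc.le
      obtain ⟨i, hit, hzi⟩ := mem_iUnion₂.1 (hcover hzK)
      have hsub : ball i (d / 8) ⊆ U ∩ ball p r := by
        intro x hx
        have hxi : dist x i < d / 8 := mem_ball.1 hx
        have hiz : dist i z < d / 8 := by rw [dist_comm]; exact mem_ball.1 hzi
        have hxz : dist x z < d / 4 :=
          lt_of_le_of_lt (dist_triangle x i z) (by linarith)
        constructor
        · apply hdU
          refine mem_thickening_iff.2 ⟨c, hc, ?_⟩
          have h3 : dist x c ≤ dist x z + dist z c := dist_triangle x z c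
          rw [hzc] at h3
          linarith
        · apply mem_ball.2
          have h4 : dist x p ≤ dist x z + dist z p := dist_triangle x z p
          rw [dist_comm z p, hpz] at h4
          linarith
      have hmle : m ≤ μ (U ∩ ball p r) :=
        le_trans (Finset.inf_le (htfin.mem_toFinset.2 hit)) (measure_mono hsub)
      calc μ (thickening δ C ∩ ball p r)
          ≤ μ V := measure_mono (inter_subset_left.trans (hδW.trans inter_subset_left))
        _ < η := hVμ
        _ ≤ ENNReal.ofReal ε * μ (U ∩ ball p r) := mul_le_mul_right hmle _
    · rw [not_nonempty_iff_eq_empty.1 hRB, measure_empty]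
      exact ENNReal.mul_pos (ENNReal.ofReal_pos.2 hε).ne' hRHS.ne'
end
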